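/- If G is a 2-connected graph with no K₄ minor and G is not a cycle, then there exists a series-parallel decomposition of G in which the final operation is a parallel join of at least three series-parallel graphs; equivalently, there exist two vertices u, v of G such that G has at least three {u,v}-bridges. -/

import Mathlib

open Finset
open scoped Classical

/-- `ZV V` is the integral lattice with basis indexed by binary labelings of `V`. -/
abbrev ZV (V : Type) : Type := (V → Bool) → ℤ

/-- The 2-way marginal `π_{ij}` of `z` at the pair `(i, j)`, as a function of the
labeling `(b₁, b₂)` of `{i, j}`. -/
noncomputable def mproj {V : Type} [Fintype V] (z : ZV V) (i j : V)
    (b₁ b₂ : Bool) : ℤ :=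
  ∑ a : V → Bool, if a i = b₁ ∧ a j = b₂ then z a else 0

/-- `z` and `z'` have the same image under `π_G`, the product of the 2-way marginal
maps `π_{ij}` over all edges `ij` of `G`. -/
def margEq {V : Type} [Fintype V] (G : SimpleGraph V) (z z' : ZV V) : Prop :=
  ∀ i j : V, G.Adj i j → ∀ b₁ b₂ : Bool, mproj z i j b₁ b₂ = mproj z' i j b₁ b₂

/-- The ℓ₁-norm on `ZV V`. -/
noncomputable def l1 {V : Type} [Fintype V] (z : ZV V) : ℤ := ∑ a, |z a|

/-- A vector is non-negative if all coordinates are non-negative. -/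
def Nonneg {V : Type} (z : ZV V) : Prop := ∀ a, 0 ≤ z a

/-- `B` is a Markov basis for the binary graph model of `G`: a finite subset of
`Ker π_G` connecting any two non-negative vectors with equal marginals through
non-negative vectors. -/
def IsMarkovBasis {V : Type} [Fintype V] (G : SimpleGraph V) (B : Finset (ZV V)) :
    Prop :=
  (∀ u ∈ B, margEq G u 0) ∧
  ∀ v₁ v₂ : ZV V, Nonneg v₁ → Nonneg v₂ → margEq G v₁ v₂ →
    ∃ (ℓ : ℕ) (u : Fin ℓ → ZV V),
      (∀ k, u k ∈ B ∨ -u k ∈ B) ∧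
      v₁ + ∑ k, u k = v₂ ∧
      ∀ l : ℕ, l ≤ ℓ →
        Nonneg (v₁ + ∑ k ∈ Finset.univ.filter (fun k : Fin ℓ => (k : ℕ) < l), u k)

/-- The Markov width `μ(G)`: the least `k` such that `G` has a Markov basis all of
whose elements have ℓ₁-norm at most `2k`. -/
noncomputable def MarkovWidth {V : Type} [Fintype V] (G : SimpleGraph V) : ℕ :=
  sInf {k : ℕ | ∃ B : Finset (ZV V), IsMarkovBasis G B ∧ ∀ u ∈ B, l1 u ≤ 2 * k}

/-- `G` has a `K₄` minor: there are four nonempty pairwise disjoint connected branch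
sets with an edge of `G` between every two of them. -/
def HasK4Minor {V : Type} (G : SimpleGraph V) : Prop :=
  ∃ f : Fin 4 → Set V,
    (∀ i, (f i).Nonempty) ∧
    (Pairwise fun i j => Disjoint (f i) (f j)) ∧
    (∀ i, (SimpleGraph.induce (f i) G).Connected) ∧
    (∀ i j, i ≠ j → ∃ a ∈ f i, ∃ b ∈ f j, G.Adj a b)

/-- A graph is 2-connected if it has at least three vertices, is connected, and
stays connected after deleting any single vertex. -/
def TwoConnected {W : Type} (G : SimpleGraph W) : Prop :=
  3 ≤ Nat.card W ∧ G.Connected ∧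
    ∀ w : W, (((⊤ : G.Subgraph).deleteVerts {w}).coe).Connected

/-- Series-parallel graphs with two poles, as spanning structures inside the
complete graph on `V`: a single edge is series-parallel, and serial and parallel
joins (gluing along one, resp. both, poles) of series-parallel graphs are
series-parallel. -/
inductive IsSP {V : Type} : (⊤ : SimpleGraph V).Subgraph → V → V → Prop
  | single {u v : V} (h : u ≠ v) :
      IsSP (SimpleGraph.subgraphOfAdj ⊤ ((SimpleGraph.top_adj u v).2 h)) u v
  | series {H₁ H₂ : (⊤ : SimpleGraph V).Subgraph} {u w v : V} :
      IsSP H₁ u w → IsSP H₂ w v → H₁.verts ∩ H₂.verts = {w} → IsSP (H₁ ⊔ H₂) u v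
  | parallel {H₁ H₂ : (⊤ : SimpleGraph V).Subgraph} {u v : V} :
      IsSP H₁ u v → IsSP H₂ u v → H₁.verts ∩ H₂.verts = {u, v} → IsSP (H₁ ⊔ H₂) u v
/-- `G` is a cycle: a connected graph in which every vertex has degree two. -/
def IsCycleGraph {W : Type} [Fintype W] (G : SimpleGraph W) : Prop :=
  G.Connected ∧ ∀ w : W, G.degree w = 2

/-- The number of `{u,v}`-bridges of `G`: one bridge for each connected component of
`G - {u, v}`, plus one for the edge `uv` if it is present. -/
noncomputable def numBridges {V : Type} (G : SimpleGraph V) (u v : V) : ℕ :=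
  Nat.card (((⊤ : G.Subgraph).deleteVerts {u, v}).coe.ConnectedComponent) +
    (if G.Adj u v then 1 else 0)

section Helpers

variable {V : Type} {G : SimpleGraph V}

/-- Lift a walk whose support lies in `s` to the induced graph on `s`. -/
lemma reachable_induce_of_walk {s : Set V} :
    ∀ {x y : V} (p : G.Walk x y), (∀ z ∈ p.support, z ∈ s) →
    ∀ (hx : x ∈ s) (hy : y ∈ s), (G.induce s).Reachable ⟨x, hx⟩ ⟨y, hy⟩ := by
  intro x y p
  induction p with
  | nil => intro _ hx hy; rfl
  | @cons a b c h p ih =>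
    intro hs hx hy
    have hz : b ∈ s := hs b (by simp [SimpleGraph.Walk.support_cons])
    refine SimpleGraph.Reachable.trans ?_
      (ih (fun z hz' => hs z (by simp [SimpleGraph.Walk.support_cons, hz'])) hz hy)
    exact SimpleGraph.Adj.reachable (show (G.induce s).Adj ⟨a, hx⟩ ⟨b, hz⟩ from h)

/-- Attaching a walk starting inside `s` to a connected induced subgraph keeps it connected. -/
lemma induce_connected_union_walk {s : Set V} (hs : (G.induce s).Connected)
    {x y : V} (p : G.Walk x y) (hx : x ∈ s) :
    (G.induce (s ∪ {z | z ∈ p.support})).Connected := by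
  set t := s ∪ {z | z ∈ p.support} with ht
  have hst : s ⊆ t := Set.subset_union_left
  have hpt : ∀ z ∈ p.support, z ∈ t := fun z hz => Or.inr hz
  have hxt : x ∈ t := hst hx
  have key : ∀ z (hz : z ∈ t), (G.induce t).Reachable ⟨z, hz⟩ ⟨x, hxt⟩ := by
    intro z hz
    rcases hz with hz | hz
    · have hr : (G.induce s).Reachable ⟨z, hz⟩ ⟨x, hx⟩ := hs.preconnected _ _
      let f : G.induce s →g G.induce t := ⟨Set.inclusion hst, fun {a b} hab => hab⟩
      exact hr.map f
    · have hq : ∀ w ∈ (p.takeUntil z hz).support, w ∈ t := fun w hw =>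
        hpt w (SimpleGraph.Walk.support_takeUntil_subset p hz hw)
      exact (reachable_induce_of_walk (p.takeUntil z hz) hq hxt (Or.inr hz)).symm
  haveI : Nonempty ↑t := ⟨⟨x, hxt⟩⟩
  refine SimpleGraph.Connected.mk ?_
  rintro ⟨z, hz⟩ ⟨z', hz'⟩
  exact (key z hz).trans (key z' hz').symm

/-- The induced graph on a singleton is connected. -/
lemma induce_singleton_connected (u : V) : (G.induce ({u} : Set V)).Connected := by
  haveI : Nonempty ↑({u} : Set V) := ⟨⟨u, rfl⟩⟩
  refine SimpleGraph.Connected.mk ?_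
  rintro ⟨a, ha⟩ ⟨b, hb⟩
  have : a = b := by simp_all
  subst this
  rfl

/-- First hit of a set `T` along a walk ending in `T`. -/
lemma exists_firstHit {T : Set V} :
    ∀ {x y : V} (p : G.Walk x y), y ∈ T →
    ∃ (m : V) (q : G.Walk x m), m ∈ T ∧ (∀ z ∈ q.support, z ∈ p.support) ∧
      (∀ z ∈ q.support, z ∈ T → z = m) ∧ (p.IsPath → q.IsPath) := by
  intro x y p
  induction p with
  | nil =>
    intro hy
    exact ⟨_, SimpleGraph.Walk.nil, hy, fun z hz => hz, fun z hz _ => by simpa using hz,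
      fun _ => SimpleGraph.Walk.IsPath.nil⟩
  | @cons a b c h p ih =>
    intro hy
    by_cases ha : a ∈ T
    · refine ⟨a, SimpleGraph.Walk.nil, ha, ?_, fun z hz _ => by simpa using hz,
        fun _ => SimpleGraph.Walk.IsPath.nil⟩
      intro z hz
      rw [SimpleGraph.Walk.support_cons]
      simp only [SimpleGraph.Walk.support_nil, List.mem_singleton] at hz
      exact hz ▸ List.mem_cons_self
    · obtain ⟨m, q, hm, hsub, hfirst, hpath⟩ := ih hy
      refine ⟨m, SimpleGraph.Walk.cons h q, hm, ?_, ?_, ?_⟩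
      · intro z hz
        rw [SimpleGraph.Walk.support_cons] at hz ⊢
        rcases List.mem_cons.mp hz with rfl | hz
        · exact List.mem_cons_self
        · exact List.mem_cons_of_mem _ (hsub z hz)
      · intro z hz hzT
        rw [SimpleGraph.Walk.support_cons] at hz
        rcases List.mem_cons.mp hz with rfl | hz
        · exact absurd hzT ha
        · exact hfirst z hz hzT
      · intro hp
        have hp' := hp.of_cons
        have hnodup : a ∉ p.support ∧ p.support.Nodup := by simpa using hp.support_nodup
        have haq : a ∉ q.support := fun hmem => hnodup.1 (hsub a hmem)
        exact (hpath hp').cons haq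

/-- Decompose a nontrivial path from `x` to `v`: the set of its vertices other than `v`
is nonempty, induced-connected, contains `x` and a neighbor of `v`. -/
lemma path_arm_decomp {x v : V} (p : G.Walk x v) (hp : p.IsPath) (hxv : x ≠ v) :
    ∃ (I : Set V), I = {z | z ∈ p.support ∧ z ≠ v} ∧ x ∈ I ∧ v ∉ I ∧
      (G.induce I).Connected ∧ ∃ z ∈ I, G.Adj v z := by
  obtain ⟨z, h, q, hq⟩ := SimpleGraph.Walk.exists_eq_cons_of_ne (Ne.symm hxv) p.reverse
  have hrp : p.reverse.IsPath := hp.reverse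
  rw [hq] at hrp
  have hvq : v ∉ q.support := by
    have hnodup : v ∉ q.support ∧ q.support.Nodup := by simpa using hrp.support_nodup
    exact hnodup.1
  have hqpath : q.IsPath := hrp.of_cons
  have hsupp : ∀ w, w ∈ p.support ↔ w = v ∨ w ∈ q.support := by
    intro w
    have : w ∈ p.support ↔ w ∈ p.reverse.support := by
      rw [SimpleGraph.Walk.support_reverse, List.mem_reverse]
    rw [this, hq, SimpleGraph.Walk.support_cons]
    simp
  have hIq : {z | z ∈ p.support ∧ z ≠ v} = {w | w ∈ q.support} := by
    ext w
    simp only [Set.mem_setOf_eq, hsupp w]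
    constructor
    · rintro ⟨hw | hw, hne⟩
      · exact absurd hw hne
      · exact hw
    · intro hw
      exact ⟨Or.inr hw, fun hwv => hvq (hwv ▸ hw)⟩
  refine ⟨{z | z ∈ p.support ∧ z ≠ v}, rfl, ⟨p.start_mem_support, hxv⟩, by simp, ?_, ?_⟩
  · rw [hIq]
    have : ({z : V | z ∈ q.support} : Set V) = {z} ∪ {w | w ∈ q.support} := by
      apply Set.eq_of_subset_of_subset
      · exact Set.subset_union_right
      · rintro w (rfl | hw)
        · exact q.start_mem_support
        · exact hw
    rw [this]
    simpa using induce_connected_union_walk (induce_singleton_connected z) q rfl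
  · exact ⟨z, by rw [hIq]; exact q.start_mem_support, h⟩

/-- From a walk in the coe of `deleteVerts S`, get a walk in `G` avoiding `S`. -/
lemma walk_avoiding_of_coe {S : Set V} :
    ∀ {x y : ((⊤ : G.Subgraph).deleteVerts S).verts}
      (_ : (((⊤ : G.Subgraph).deleteVerts S).coe).Walk x y),
    ∃ p : G.Walk (x : V) (y : V), ∀ z ∈ p.support, z ∉ S := by
  intro x y w
  induction w with
  | nil =>
    rename_i a
    refine ⟨SimpleGraph.Walk.nil, ?_⟩
    intro z hz
    simp only [SimpleGraph.Walk.support_nil, List.mem_singleton] at hz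
    subst hz
    exact a.2.2
  | @cons a b c h w ih =>
    obtain ⟨p, hp⟩ := ih
    have hadj : G.Adj (a : V) (b : V) := ((⊤ : G.Subgraph).deleteVerts S).coe_adj_sub _ _ h
    refine ⟨SimpleGraph.Walk.cons hadj p, ?_⟩
    intro z hz
    rw [SimpleGraph.Walk.support_cons] at hz
    rcases List.mem_cons.mp hz with rfl | hz
    · exact a.2.2
    · exact hp z hz

/-- Conversely, a walk in `G` avoiding `S` gives reachability in the coe graph. -/
lemma coe_reachable_of_walk_avoiding {S : Set V} :
    ∀ {x y : V} (p : G.Walk x y), (∀ z ∈ p.support, z ∉ S) →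
    ∀ (hx : x ∈ ((⊤ : G.Subgraph).deleteVerts S).verts)
      (hy : y ∈ ((⊤ : G.Subgraph).deleteVerts S).verts),
    (((⊤ : G.Subgraph).deleteVerts S).coe).Reachable ⟨x, hx⟩ ⟨y, hy⟩ := by
  intro x y p
  induction p with
  | nil => intro _ hx hy; rfl
  | @cons a b c h p ih =>
    intro hs hx hy
    have hbS : b ∉ S := hs b (by simp [SimpleGraph.Walk.support_cons])
    have hb : b ∈ ((⊤ : G.Subgraph).deleteVerts S).verts := ⟨trivial, hbS⟩
    refine SimpleGraph.Reachable.trans ?_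
      (ih (fun z hz => hs z (by simp [SimpleGraph.Walk.support_cons, hz])) hb hy)
    refine SimpleGraph.Adj.reachable ?_
    show (((⊤ : G.Subgraph).deleteVerts S).coe).Adj ⟨a, hx⟩ ⟨b, hb⟩
    rw [SimpleGraph.Subgraph.coe_adj]
    rw [SimpleGraph.Subgraph.deleteVerts_adj]
    exact ⟨trivial, hx.2, trivial, hbS, h⟩

/-- On a path, the takeUntil and dropUntil parts meet only at the split vertex. -/
lemma takeUntil_dropUntil_inter [DecidableEq V] {x y m : V} {p : G.Walk x y} (hp : p.IsPath)
    (hm : m ∈ p.support) :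
    ∀ z, z ∈ (p.takeUntil m hm).support → z ∈ (p.dropUntil m hm).support → z = m := by
  intro z hz1 hz2
  have hspec := p.take_spec hm
  have hnodup : p.support.Nodup := hp.support_nodup
  rw [← hspec, SimpleGraph.Walk.support_append] at hnodup
  have hdisj := List.disjoint_of_nodup_append hnodup
  by_contra hne
  have : z ∈ (p.dropUntil m hm).support.tail := by
    have := (p.dropUntil m hm).support_eq_cons
    rw [this] at hz2
    rcases List.mem_cons.mp hz2 with rfl | hz2
    · exact absurd rfl hne
    · rw [this]; exact hz2
  exact hdisj hz1 this

/-- An "arm" between `u` and `v`: a connected set avoiding both, with neighbors of each. -/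
structure GArm (G : SimpleGraph V) (u v : V) (I : Set V) : Prop where
  nonempty : I.Nonempty
  hu : u ∉ I
  hv : v ∉ I
  conn : (G.induce I).Connected
  adj_u : ∃ x ∈ I, G.Adj u x
  adj_v : ∃ y ∈ I, G.Adj v y


lemma k4_core {u v : V} (huv : u ≠ v)
    {I₁ IJ IK : Set V} (A1 : GArm G u v I₁) (AJ : GArm G u v IJ)
    (hK : GArm G u v IK ∨ (IK = ∅ ∧ G.Adj u v))
    (d1J : Disjoint I₁ IJ) (d1K : Disjoint I₁ IK) (dJK : Disjoint IJ IK)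
    {x' m : V} (hx' : x' ∈ I₁) (hm : m ∈ IJ)
    (r : G.Walk m x') (hr : r.IsPath)
    (hrS : ∀ z ∈ r.support, z ≠ u ∧ z ≠ v)
    (hrJ : ∀ z ∈ r.support, z ∈ IJ → z = m)
    (hrK : ∀ z ∈ r.support, z ∉ IK) :
    HasK4Minor G := by
  have hmx' : m ≠ x' := fun h => (Set.disjoint_left.mp d1J hx') (by rw [← h] at hx' ⊢; exact hm)
  obtain ⟨z0, hadj, rest, hreq⟩ := SimpleGraph.Walk.exists_eq_cons_of_ne hmx' r
  have hrpath : (SimpleGraph.Walk.cons hadj rest).IsPath := hreq ▸ hr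
  have hmnodup : m ∉ rest.support ∧ rest.support.Nodup := by
    simpa using hrpath.support_nodup
  have hrestsub : ∀ z ∈ rest.support, z ∈ r.support := by
    intro z hz
    rw [hreq, SimpleGraph.Walk.support_cons]
    exact List.mem_cons_of_mem _ hz
  set R : Set V := {z | z ∈ rest.support} with hR
  have hRJ : ∀ z ∈ R, z ∉ IJ := fun z hz hzJ =>
    hmnodup.1 ((hrJ z (hrestsub z hz) hzJ) ▸ hz)
  have hRK : ∀ z ∈ R, z ∉ IK := fun z hz => hrK z (hrestsub z hz)
  have hRuv : ∀ z ∈ R, z ≠ u ∧ z ≠ v := fun z hz => hrS z (hrestsub z hz)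
  have hKu : u ∉ IK := by rcases hK with AK | ⟨he, _⟩; exacts [AK.hu, by simp [he]]
  have hKv : v ∉ IK := by rcases hK with AK | ⟨he, _⟩; exacts [AK.hv, by simp [he]]
  let f : Fin 4 → Set V := fun i => match i with
    | 0 => {u} ∪ IK
    | 1 => {v}
    | 2 => I₁ ∪ R
    | 3 => IJ
  refine ⟨f, ?_, ?_, ?_, ?_⟩
  · intro i
    fin_cases i
    · exact ⟨u, Or.inl rfl⟩
    · exact ⟨v, rfl⟩
    · exact ⟨x', Or.inl hx'⟩
    · exact ⟨m, hm⟩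
  · -- pairwise disjoint
    have D01 : Disjoint ({u} ∪ IK) ({v} : Set V) := by
      refine Set.disjoint_singleton_right.mpr ?_
      rintro (h | h)
      · exact huv (Set.mem_singleton_iff.mp h).symm
      · exact hKv h
    have D02 : Disjoint ({u} ∪ IK) (I₁ ∪ R) := by
      rw [Set.disjoint_left]
      rintro z (rfl | hz)
      · rintro (h | h)
        · exact A1.hu h
        · exact (hRuv z h).1 rfl
      · rintro (h | h)
        · exact Set.disjoint_left.mp d1K h hz
        · exact hRK z h hz
    have D03 : Disjoint ({u} ∪ IK) IJ := by
      rw [Set.disjoint_left]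
      rintro z (rfl | hz) h
      · exact AJ.hu h
      · exact Set.disjoint_left.mp dJK h hz
    have D12 : Disjoint ({v} : Set V) (I₁ ∪ R) := by
      refine Set.disjoint_singleton_left.mpr ?_
      rintro (h | h)
      · exact A1.hv h
      · exact (hRuv v h).2 rfl
    have D13 : Disjoint ({v} : Set V) IJ :=
      Set.disjoint_singleton_left.mpr AJ.hv
    have D23 : Disjoint (I₁ ∪ R) IJ := by
      rw [Set.disjoint_left]
      rintro z (hz | hz) h
      · exact Set.disjoint_left.mp d1J hz h
      · exact hRJ z hz h
    intro i j hij
    fin_cases i <;> fin_cases j <;>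
      first
        | exact absurd rfl hij
        | exact D01 | exact D02 | exact D03 | exact D12 | exact D13 | exact D23
        | exact D01.symm | exact D02.symm | exact D03.symm | exact D12.symm
        | exact D13.symm | exact D23.symm
  · -- connectivity
    intro i
    fin_cases i
    · rcases hK with AK | ⟨he, _⟩
      · obtain ⟨xk, hxk, hadjuk⟩ := AK.adj_u
        have hconn := induce_connected_union_walk AK.conn
          (SimpleGraph.Walk.cons hadjuk.symm SimpleGraph.Walk.nil) hxk
        have hsupp : ∀ z : V,
            z ∈ (SimpleGraph.Walk.cons hadjuk.symm SimpleGraph.Walk.nil).support ↔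
              z = xk ∨ z = u := by
          intro z
          simp [SimpleGraph.Walk.support_cons]
        have hset : IK ∪
            {z | z ∈ (SimpleGraph.Walk.cons hadjuk.symm SimpleGraph.Walk.nil).support}
            = {u} ∪ IK := by
          ext z
          rw [Set.mem_union, Set.mem_setOf_eq, hsupp z, Set.mem_union, Set.mem_singleton_iff]
          constructor
          · rintro (h | h | h)
            · exact Or.inr h
            · exact Or.inr (h ▸ hxk)
            · exact Or.inl h
          · rintro (h | h)
            · exact Or.inr (Or.inr h)
            · exact Or.inl h
        rw [hset] at hconn
        exact hconn
      · have hset : ({u} ∪ IK) = ({u} : Set V) := by simp [he]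
        rw [show f 0 = {u} ∪ IK from rfl, hset]
        exact induce_singleton_connected u
    · exact induce_singleton_connected v
    · have hconn := induce_connected_union_walk A1.conn rest.reverse hx'
      have hset : I₁ ∪ {z | z ∈ rest.reverse.support} = I₁ ∪ R := by
        ext z
        simp [hR, SimpleGraph.Walk.support_reverse, List.mem_reverse]
      rw [hset] at hconn
      exact hconn
    · exact AJ.conn
  · -- adjacency
    have E01 : ∃ a ∈ f 0, ∃ b ∈ f 1, G.Adj a b := by
      rcases hK with AK | ⟨_, hadjuv⟩
      · obtain ⟨yk, hyk, h⟩ := AK.adj_v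
        exact ⟨yk, Or.inr hyk, v, rfl, h.symm⟩
      · exact ⟨u, Or.inl rfl, v, rfl, hadjuv⟩
    have E02 : ∃ a ∈ f 0, ∃ b ∈ f 2, G.Adj a b := by
      obtain ⟨x1, hx1, h⟩ := A1.adj_u
      exact ⟨u, Or.inl rfl, x1, Or.inl hx1, h⟩
    have E03 : ∃ a ∈ f 0, ∃ b ∈ f 3, G.Adj a b := by
      obtain ⟨xJ, hxJ, h⟩ := AJ.adj_u
      exact ⟨u, Or.inl rfl, xJ, hxJ, h⟩
    have E12 : ∃ a ∈ f 1, ∃ b ∈ f 2, G.Adj a b := by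
      obtain ⟨y1, hy1, h⟩ := A1.adj_v
      exact ⟨v, rfl, y1, Or.inl hy1, h⟩
    have E13 : ∃ a ∈ f 1, ∃ b ∈ f 3, G.Adj a b := by
      obtain ⟨yJ, hyJ, h⟩ := AJ.adj_v
      exact ⟨v, rfl, yJ, hyJ, h⟩
    have E23 : ∃ a ∈ f 2, ∃ b ∈ f 3, G.Adj a b := by
      exact ⟨z0, Or.inr rest.start_mem_support, m, hm, hadj.symm⟩
    have symm : ∀ i j : Fin 4, (∃ a ∈ f i, ∃ b ∈ f j, G.Adj a b) →
        ∃ a ∈ f j, ∃ b ∈ f i, G.Adj a b := by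
      rintro i j ⟨a, ha, b, hb, h⟩
      exact ⟨b, hb, a, ha, h.symm⟩
    have key : ∀ i j : Fin 4, i < j → ∃ a ∈ f i, ∃ b ∈ f j, G.Adj a b := by
      intro i j hlt
      fin_cases i <;> fin_cases j <;>
        first
          | exact absurd hlt (by decide)
          | exact E01 | exact E02 | exact E03 | exact E12 | exact E13 | exact E23
    intro i j hij
    rcases hij.lt_or_gt with h | h
    · exact key i j h
    · exact symm j i (key j i h)

lemma k4_of_walk_between_arms {u v : V} (huv : u ≠ v)
    {I₁ I₂ I₃ : Set V} (A1 : GArm G u v I₁) (A2 : GArm G u v I₂)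
    (h3 : GArm G u v I₃ ∨ (I₃ = ∅ ∧ G.Adj u v))
    (d12 : Disjoint I₁ I₂) (d13 : Disjoint I₁ I₃) (d23 : Disjoint I₂ I₃)
    {x y : V} (hx : x ∈ I₁) (hy : y ∈ I₂)
    (p : G.Walk x y) (hpS : ∀ z ∈ p.support, z ≠ u ∧ z ≠ v) :
    HasK4Minor G := by
  classical
  -- make it a path
  set q : G.Walk x y := (p.toPath : G.Walk x y) with hqdef
  have hqpath : q.IsPath := p.toPath.2
  have hqsub : ∀ z ∈ q.support, z ∈ p.support := fun z hz =>
    SimpleGraph.Walk.support_toPath_subset p hz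
  have hqS : ∀ z ∈ q.support, z ≠ u ∧ z ≠ v := fun z hz => hpS z (hqsub z hz)
  -- first hit of I₂ ∪ I₃
  obtain ⟨m, q₁, hmT, hq₁sub, hq₁first, hq₁path'⟩ :=
    exists_firstHit (T := I₂ ∪ I₃) q (Or.inl hy)
  have hq₁path : q₁.IsPath := hq₁path' hqpath
  have hq₁S : ∀ z ∈ q₁.support, z ≠ u ∧ z ≠ v := fun z hz => hqS z (hq₁sub z hz)
  -- last visit to I₁ : first hit of I₁ along the reverse walk
  obtain ⟨x', r, hx'1, hrsub, hrfirst, hrpath'⟩ :=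
    exists_firstHit (T := I₁) q₁.reverse hx
  have hrpath : r.IsPath := hrpath' hq₁path.reverse
  have hrsub' : ∀ z ∈ r.support, z ∈ q₁.support := by
    intro z hz
    have := hrsub z hz
    rwa [SimpleGraph.Walk.support_reverse, List.mem_reverse] at this
  have hrS : ∀ z ∈ r.support, z ≠ u ∧ z ≠ v := fun z hz => hq₁S z (hrsub' z hz)
  rcases hmT with hm2 | hm3
  · -- m ∈ I₂ : arms (I₁, I₂), spare I₃
    refine k4_core huv A1 A2 h3 d12 d13 d23 hx'1 hm2 r hrpath hrS ?_ ?_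
    · intro z hz hz2
      exact hq₁first z (hrsub' z hz) (Or.inl hz2)
    · intro z hz hz3
      have hzm := hq₁first z (hrsub' z hz) (Or.inr hz3)
      rw [hzm] at hz3
      exact Set.disjoint_right.mp d23 hz3 hm2
  · -- m ∈ I₃ : then I₃ is a real arm; arms (I₁, I₃), spare I₂
    rcases h3 with A3 | ⟨he, _⟩
    · refine k4_core huv A1 A3 (Or.inl A2) d13 d12 d23.symm hx'1 hm3 r hrpath hrS ?_ ?_
      · intro z hz hz3
        exact hq₁first z (hrsub' z hz) (Or.inr hz3)
      · intro z hz hz2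
        have hzm := hq₁first z (hrsub' z hz) (Or.inl hz2)
        rw [hzm] at hz2
        exact Set.disjoint_left.mp d23 hz2 hm3
    · rw [he] at hm3
      exact absurd hm3 (Set.notMem_empty m)


lemma three_le_numBridges {V : Type} [Fintype V] {G : SimpleGraph V} {u v : V}
    (huv : u ≠ v) {I₁ I₂ : Set V} (A1 : GArm G u v I₁) (A2 : GArm G u v I₂)
    (d12 : Disjoint I₁ I₂)
    (h3 : (∃ I₃, GArm G u v I₃ ∧ Disjoint I₁ I₃ ∧ Disjoint I₂ I₃) ∨ G.Adj u v)
    (hK4 : ¬ HasK4Minor G) : 3 ≤ numBridges G u v := by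
  classical
  set S : Set V := {u, v} with hS
  set H := (⊤ : G.Subgraph).deleteVerts S with hH
  have hmem : ∀ z : V, z ∉ I₁ → True → z ≠ u → z ≠ v → z ∈ H.verts := by
    intro z _ _ h1 h2
    exact ⟨trivial, by simp [hS, h1, h2]⟩
  have memArm : ∀ {I : Set V}, GArm G u v I → ∀ {z : V}, z ∈ I → z ∈ H.verts := by
    intro I A z hz
    refine ⟨trivial, ?_⟩
    simp only [hS, Set.mem_insert_iff, Set.mem_singleton_iff]
    push_neg
    exact ⟨fun h => A.hu (h ▸ hz), fun h => A.hv (h ▸ hz)⟩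
  -- separation: two disjoint arms (with a third arm-or-edge) are in different components
  have sep : ∀ {Ia Ib Ic : Set V} (Aa : GArm G u v Ia) (Ab : GArm G u v Ib),
      (GArm G u v Ic ∨ (Ic = ∅ ∧ G.Adj u v)) →
      Disjoint Ia Ib → Disjoint Ia Ic → Disjoint Ib Ic →
      ∀ {a b : V} (ha : a ∈ Ia) (hb : b ∈ Ib),
      H.coe.connectedComponentMk ⟨a, memArm Aa ha⟩ ≠
        H.coe.connectedComponentMk ⟨b, memArm Ab hb⟩ := by
    intro Ia Ib Ic Aa Ab hc dab dac dbc a b ha hb heq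
    have hreach := SimpleGraph.ConnectedComponent.exact heq
    obtain ⟨wk⟩ := hreach
    obtain ⟨p, hp⟩ := walk_avoiding_of_coe wk
    refine hK4 (k4_of_walk_between_arms huv Aa Ab hc dab dac dbc ha hb p ?_)
    intro z hz
    have := hp z hz
    simp only [hS, Set.mem_insert_iff, Set.mem_singleton_iff] at this
    push_neg at this
    exact this
  haveI : Finite (H.coe.ConnectedComponent) := by
    have : Finite ↥H.verts := Subtype.finite
    exact Quot.finite _
  haveI : Fintype (H.coe.ConnectedComponent) := Fintype.ofFinite _
  obtain ⟨x₁, hx₁⟩ := A1.nonempty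
  obtain ⟨x₂, hx₂⟩ := A2.nonempty
  set c₁ := H.coe.connectedComponentMk ⟨x₁, memArm A1 hx₁⟩ with hc₁
  set c₂ := H.coe.connectedComponentMk ⟨x₂, memArm A2 hx₂⟩ with hc₂
  have hnum : numBridges G u v =
      Nat.card (H.coe.ConnectedComponent) + (if G.Adj u v then 1 else 0) := rfl
  rcases h3 with ⟨I₃, A3, d13, d23⟩ | hadj
  · obtain ⟨x₃, hx₃⟩ := A3.nonempty
    set c₃ := H.coe.connectedComponentMk ⟨x₃, memArm A3 hx₃⟩ with hc₃
    have h12 : c₁ ≠ c₂ := sep A1 A2 (Or.inl A3) d12 d13 d23 hx₁ hx₂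
    have h13 : c₁ ≠ c₃ := sep A1 A3 (Or.inl A2) d13 d12 d23.symm hx₁ hx₃
    have h23 : c₂ ≠ c₃ := sep A2 A3 (Or.inl A1) d23 d12.symm d13.symm hx₂ hx₃
    have hcard : ({c₁, c₂, c₃} : Finset (H.coe.ConnectedComponent)).card = 3 := by
      rw [Finset.card_insert_of_notMem (by simp [h12, h13]),
        Finset.card_insert_of_notMem (by simp [h23]), Finset.card_singleton]
    have h3le : 3 ≤ Nat.card (H.coe.ConnectedComponent) := by
      rw [Nat.card_eq_fintype_card, ← hcard]
      exact Finset.card_le_univ _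
    rw [hnum]
    exact le_trans h3le (Nat.le_add_right _ _)
  · have h12 : c₁ ≠ c₂ := sep A1 A2 (Or.inr ⟨rfl, hadj⟩) d12
      (Set.disjoint_empty _) (Set.disjoint_empty _) hx₁ hx₂
    have hcard : ({c₁, c₂} : Finset (H.coe.ConnectedComponent)).card = 2 := by
      rw [Finset.card_insert_of_notMem (by simp [h12]), Finset.card_singleton]
    have h2le : 2 ≤ Nat.card (H.coe.ConnectedComponent) := by
      rw [Nat.card_eq_fintype_card, ← hcard]
      exact Finset.card_le_univ _
    rw [hnum, if_pos hadj]
    omega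


lemma two_le_degree {V : Type} [Fintype V] [DecidableEq V] {G : SimpleGraph V}
    (h2 : TwoConnected G) (w : V) : 2 ≤ G.degree w := by
  classical
  by_contra hlt
  push_neg at hlt
  have hcardV : 3 ≤ Fintype.card V := by
    have := h2.1
    rwa [Nat.card_eq_fintype_card] at this
  interval_cases hdeg : G.degree w
  · -- degree 0 : no neighbors, but G connected with ≥ 2 vertices
    obtain ⟨y, hy⟩ := Fintype.exists_ne_of_one_lt_card (by omega) w
    have hreach := h2.2.1.preconnected w y
    obtain ⟨p⟩ := hreach
    obtain ⟨z, h, q, _⟩ := SimpleGraph.Walk.exists_eq_cons_of_ne (Ne.symm hy) p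
    have hmem : z ∈ G.neighborFinset w := (G.mem_neighborFinset w _).mpr h
    rw [← G.card_neighborFinset_eq_degree] at hdeg
    rw [Finset.card_eq_zero.mp hdeg] at hmem
    exact absurd hmem (Finset.notMem_empty _)
  · -- degree 1 : unique neighbor x; delete it
    rw [← G.card_neighborFinset_eq_degree] at hdeg
    obtain ⟨x, hx⟩ := Finset.card_eq_one.mp hdeg
    have hadjwx : G.Adj w x := by
      rw [← G.mem_neighborFinset w x, hx]
      exact Finset.mem_singleton_self x
    have hwx : w ≠ x := G.ne_of_adj hadjwx
    -- find y ∉ {w, x}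
    have hex : ∃ y : V, y ≠ w ∧ y ≠ x := by
      by_contra hno
      push_neg at hno
      have : (Finset.univ : Finset V) ⊆ {w, x} := by
        intro z _
        rcases Classical.em (z = w) with rfl | hz
        · exact Finset.mem_insert_self _ _
        · rw [hno z hz]
          exact Finset.mem_insert_of_mem (Finset.mem_singleton_self x)
      have := Finset.card_le_card this
      have h2' : ({w, x} : Finset V).card ≤ 2 := Finset.card_insert_le _ _ |>.trans (by simp)
      rw [Finset.card_univ] at this
      omega
    obtain ⟨y, hyw, hyx⟩ := hex
    have hconn := h2.2.2 x
    have hwmem : w ∈ ((⊤ : G.Subgraph).deleteVerts {x}).verts :=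
      ⟨trivial, by simp [hwx]⟩
    have hymem : y ∈ ((⊤ : G.Subgraph).deleteVerts {x}).verts :=
      ⟨trivial, by simp [hyx]⟩
    obtain ⟨p⟩ := hconn.preconnected ⟨w, hwmem⟩ ⟨y, hymem⟩
    have hne : (⟨w, hwmem⟩ : ↥((⊤ : G.Subgraph).deleteVerts {x}).verts) ≠ ⟨y, hymem⟩ :=
      fun he => hyw (congrArg Subtype.val he).symm
    obtain ⟨b, h, q, _⟩ := SimpleGraph.Walk.exists_eq_cons_of_ne hne p
    have hadj : G.Adj w (b : V) := ((⊤ : G.Subgraph).deleteVerts {x}).coe_adj_sub _ _ h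
    have hbx : (b : V) ≠ x := by
      have := b.2.2
      simpa using this
    have hmem : (b : V) ∈ G.neighborFinset w := (G.mem_neighborFinset w _).mpr hadj
    rw [hx, Finset.mem_singleton] at hmem
    exact hbx hmem


theorem exists_three_bridges' {V : Type} [Fintype V] [DecidableEq V]
    (G : SimpleGraph V) (h2 : TwoConnected G) (hK4 : ¬ HasK4Minor G)
    (hcyc : ¬ IsCycleGraph G) :
    ∃ u v : V, u ≠ v ∧ 3 ≤ numBridges G u v := by
  classical
  have hdeg2 : ∀ w : V, 2 ≤ G.degree w := two_le_degree h2
  have hw3 : ∃ w : V, 3 ≤ G.degree w := by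
    by_contra hno
    push_neg at hno
    refine hcyc ⟨h2.2.1, fun w => ?_⟩
    have := hdeg2 w
    have := hno w
    omega
  obtain ⟨w, hw⟩ := hw3
  -- three distinct neighbors
  have hcard : 3 ≤ (G.neighborFinset w).card := by
    rwa [G.card_neighborFinset_eq_degree]
  obtain ⟨a, ha⟩ := Finset.card_pos.mp (show 0 < (G.neighborFinset w).card by omega)
  have hcard2 : 2 ≤ ((G.neighborFinset w).erase a).card := by
    rw [Finset.card_erase_of_mem ha]; omega
  obtain ⟨b, hb⟩ := Finset.card_pos.mp (by omega : 0 < ((G.neighborFinset w).erase a).card)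
  have hba : b ≠ a := (Finset.mem_erase.mp hb).1
  have hbmem : b ∈ G.neighborFinset w := (Finset.mem_erase.mp hb).2
  have hcard1 : 1 ≤ (((G.neighborFinset w).erase a).erase b).card := by
    rw [Finset.card_erase_of_mem hb]; omega
  obtain ⟨c, hc⟩ := Finset.card_pos.mp (by omega :
    0 < (((G.neighborFinset w).erase a).erase b).card)
  have hcb : c ≠ b := (Finset.mem_erase.mp hc).1
  have hca : c ≠ a := (Finset.mem_erase.mp (Finset.mem_erase.mp hc).2).1
  have hcmem : c ∈ G.neighborFinset w := (Finset.mem_erase.mp (Finset.mem_erase.mp hc).2).2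
  have hadjwa : G.Adj w a := (G.mem_neighborFinset w a).mp ha
  have hadjwb : G.Adj w b := (G.mem_neighborFinset w b).mp hbmem
  have hadjwc : G.Adj w c := (G.mem_neighborFinset w c).mp hcmem
  have haw : a ≠ w := fun h => (G.ne_of_adj hadjwa) h.symm
  have hbw : b ≠ w := fun h => (G.ne_of_adj hadjwb) h.symm
  have hcw : c ≠ w := fun h => (G.ne_of_adj hadjwc) h.symm
  -- reach avoiding w
  have reachAvoid : ∀ {s t : V}, s ≠ w → t ≠ w →
      ∃ P : G.Walk s t, ∀ z ∈ P.support, z ≠ w := by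
    intro s t hs ht
    have hconn := h2.2.2 w
    have hsmem : s ∈ ((⊤ : G.Subgraph).deleteVerts {w}).verts := ⟨trivial, by simp [hs]⟩
    have htmem : t ∈ ((⊤ : G.Subgraph).deleteVerts {w}).verts := ⟨trivial, by simp [ht]⟩
    obtain ⟨wk⟩ := hconn.preconnected ⟨s, hsmem⟩ ⟨t, htmem⟩
    obtain ⟨P, hP⟩ := walk_avoiding_of_coe wk
    refine ⟨P, fun z hz => ?_⟩
    have := hP z hz
    simpa using this
  -- the path P from a to b avoiding w
  obtain ⟨P0, hP0⟩ := reachAvoid haw hbw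
  set P : G.Walk a b := (P0.toPath : G.Walk a b) with hPdef
  have hPpath : P.IsPath := P0.toPath.2
  have hPw : ∀ z ∈ P.support, z ≠ w := fun z hz =>
    hP0 z (SimpleGraph.Walk.support_toPath_subset P0 hz)
  -- the path q from c towards a, cut at first meeting with P
  obtain ⟨Q0, hQ0⟩ := reachAvoid hcw haw
  set q : G.Walk c a := (Q0.toPath : G.Walk c a) with hqdef
  have hqpath : q.IsPath := Q0.toPath.2
  have hqw : ∀ z ∈ q.support, z ≠ w := fun z hz =>
    hQ0 z (SimpleGraph.Walk.support_toPath_subset Q0 hz)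
  obtain ⟨m, q₁, hmP', hq₁sub, hq₁first, hq₁path'⟩ :=
    exists_firstHit (T := {z | z ∈ P.support}) q P.start_mem_support
  have hmP : m ∈ P.support := hmP'
  have hq₁path : q₁.IsPath := hq₁path' hqpath
  have hq₁w : ∀ z ∈ q₁.support, z ≠ w := fun z hz => hqw z (hq₁sub z hz)
  have hmw : m ≠ w := hq₁w m q₁.end_mem_support
  have huv : w ≠ m := Ne.symm hmw
  -- split P at m
  set P₁ : G.Walk a m := P.takeUntil m hmP with hP₁def
  set Pd : G.Walk m b := P.dropUntil m hmP with hPddef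
  set P₂ : G.Walk b m := Pd.reverse with hP₂def
  have hP₁path : P₁.IsPath := hPpath.takeUntil hmP
  have hPdpath : Pd.IsPath := hPpath.dropUntil hmP
  have hP₂path : P₂.IsPath := hPdpath.reverse
  have hP₁sub : ∀ z ∈ P₁.support, z ∈ P.support := fun z hz =>
    SimpleGraph.Walk.support_takeUntil_subset P hmP hz
  have hPdsub : ∀ z ∈ Pd.support, z ∈ P.support := fun z hz =>
    SimpleGraph.Walk.support_dropUntil_subset P hmP hz
  have hP₂mem : ∀ z, z ∈ P₂.support ↔ z ∈ Pd.support := by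
    intro z
    rw [hP₂def, SimpleGraph.Walk.support_reverse, List.mem_reverse]
  have hP₁w : ∀ z ∈ P₁.support, z ≠ w := fun z hz => hPw z (hP₁sub z hz)
  have hP₂w : ∀ z ∈ P₂.support, z ≠ w := fun z hz =>
    hPw z (hPdsub z ((hP₂mem z).mp hz))
  -- arm maker
  have mkArm : ∀ {s : V} (pth : G.Walk s m), pth.IsPath → s ≠ m → G.Adj w s →
      (∀ z ∈ pth.support, z ≠ w) →
      GArm G w m {z | z ∈ pth.support ∧ z ≠ m} := by
    intro s pth hpath hsm hadj hav
    obtain ⟨I, hIdef, hsI, hmI, hconn, z', hz'I, hz'adj⟩ := path_arm_decomp pth hpath hsm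
    rw [← hIdef]
    exact {
      nonempty := ⟨s, hsI⟩
      hu := fun hwI => hav w (hIdef ▸ hwI).1 rfl
      hv := hmI
      conn := hconn
      adj_u := ⟨s, hsI, hadj⟩
      adj_v := ⟨z', hz'I, hz'adj⟩ }
  -- the three (potential) arms
  set Ia : Set V := {z | z ∈ P₁.support ∧ z ≠ m} with hIa
  set Ib : Set V := {z | z ∈ P₂.support ∧ z ≠ m} with hIb
  set Ic : Set V := {z | z ∈ q₁.support ∧ z ≠ m} with hIc
  -- disjointness
  have dab : Disjoint Ia Ib := by
    rw [Set.disjoint_left]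
    rintro z ⟨hz1, hzm⟩ ⟨hz2, _⟩
    have hz1' : z ∈ (P.takeUntil m hmP).support := by rw [← hP₁def]; exact hz1
    have hz2' : z ∈ (P.dropUntil m hmP).support := by rw [← hPddef]; exact (hP₂mem z).mp hz2
    exact hzm (takeUntil_dropUntil_inter hPpath hmP z hz1' hz2')
  have dac : Disjoint Ia Ic := by
    rw [Set.disjoint_left]
    rintro z ⟨hz1, hzm⟩ ⟨hz2, _⟩
    exact hzm (hq₁first z hz2 (hP₁sub z hz1))
  have dbc : Disjoint Ib Ic := by
    rw [Set.disjoint_left]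
    rintro z ⟨hz1, hzm⟩ ⟨hz2, _⟩
    exact hzm (hq₁first z hz2 (hPdsub z ((hP₂mem z).mp hz1)))
  refine ⟨w, m, huv, ?_⟩
  by_cases ham : a = m
  · -- degenerate a-arm : edge w-m; use arms Ib, Ic
    have hedge : G.Adj w m := ham ▸ hadjwa
    have hbm : b ≠ m := fun h => hba (h.trans ham.symm)
    have hcm : c ≠ m := fun h => hca (h.trans ham.symm)
    have Ab := mkArm P₂ hP₂path hbm hadjwb hP₂w
    have Ac := mkArm q₁ hq₁path hcm hadjwc hq₁w
    exact three_le_numBridges huv Ab Ac dbc (Or.inr hedge) hK4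
  · by_cases hbm : b = m
    · have hedge : G.Adj w m := hbm ▸ hadjwb
      have hcm : c ≠ m := fun h => hcb (h.trans hbm.symm)
      have Aa := mkArm P₁ hP₁path ham hadjwa hP₁w
      have Ac := mkArm q₁ hq₁path hcm hadjwc hq₁w
      exact three_le_numBridges huv Aa Ac dac (Or.inr hedge) hK4
    · by_cases hcm : c = m
      · have hedge : G.Adj w m := hcm ▸ hadjwc
        have Aa := mkArm P₁ hP₁path ham hadjwa hP₁w
        have Ab := mkArm P₂ hP₂path hbm hadjwb hP₂w
        exact three_le_numBridges huv Aa Ab dab (Or.inr hedge) hK4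
      · have Aa := mkArm P₁ hP₁path ham hadjwa hP₁w
        have Ab := mkArm P₂ hP₂path hbm hadjwb hP₂w
        have Ac := mkArm q₁ hq₁path hcm hadjwc hq₁w
        exact three_le_numBridges huv Aa Ab dab (Or.inl ⟨Ic, Ac, dac, dbc⟩) hK4

end Helpers

/-- If `G` is 2-connected, has no `K₄` minor and is not a cycle, then there are two
vertices `u` and `v` such that `G` has at least three `{u,v}`-bridges (equivalently,
`G` has a series-parallel decomposition whose final operation is a parallel join of
at least three series-parallel graphs). -/
theorem exists_three_bridges {V : Type} [Fintype V] [DecidableEq V]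
    (G : SimpleGraph V) (h2 : TwoConnected G) (hK4 : ¬ HasK4Minor G)
    (hcyc : ¬ IsCycleGraph G) :
    ∃ u v : V, u ≠ v ∧ 3 ≤ numBridges G u v := by
  exact exists_three_bridges' G h2 hK4 hcyc
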